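/- Fix a linear order ≺ on A_c and the induced lexicographic order on Red_A(c). Then within each Hurwitz orbit of Red_A(c), the lexicographically smallest factorization is ≺-rising (weakly increasing). -/
import Mathlib


variable {G : Type*} [Group G]

/-- `A` generates `G` as a monoid. -/
def GeneratesM (A : Set G) : Prop :=
  ∀ x : G, ∃ l : List G, (∀ a ∈ l, a ∈ A) ∧ l.prod = x

/-- `A` is closed under `G`-conjugation. -/
def ConjClosed (A : Set G) : Prop :=
  ∀ g a : G, a ∈ A → g * a * g⁻¹ ∈ A

/-- The `A`-length of `x`: minimal number of factors from `A` needed to write `x`. -/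
noncomputable def lenA (A : Set G) (x : G) : ℕ :=
  sInf {n : ℕ | ∃ l : List G, (∀ a ∈ l, a ∈ A) ∧ l.prod = x ∧ l.length = n}

/-- The `A`-prefix order. -/
def leA (A : Set G) (x y : G) : Prop :=
  lenA A x + lenA A (x⁻¹ * y) = lenA A y

/-- The set of reduced `A`-factorizations of `x`, as lists. -/
def RedA (A : Set G) (x : G) : Set (List G) :=
  {l : List G | (∀ a ∈ l, a ∈ A) ∧ l.prod = x ∧ l.length = lenA A x}

/-- `A_c`: the generators occurring below `c`. -/
def Ac (A : Set G) (c : G) : Set G := {a : G | a ∈ A ∧ leA A a c}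

/-- A single Hurwitz move on factorizations. -/
def HurwitzMove : List G → List G → Prop := fun l m =>
  ∃ (p s : List G) (a b : G),
    l = p ++ a :: b :: s ∧ m = p ++ b :: (b⁻¹ * a * b) :: s

/-- `r` is a linear order on the set `S`. -/
def IsLinearOrderOn (S : Set G) (r : G → G → Prop) : Prop :=
  (∀ a ∈ S, r a a) ∧
  (∀ a ∈ S, ∀ b ∈ S, r a b → r b a → a = b) ∧
  (∀ a ∈ S, ∀ b ∈ S, ∀ c ∈ S, r a b → r b c → r a c) ∧
  (∀ a ∈ S, ∀ b ∈ S, r a b ∨ r b a)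

/-- `r` is a `c`-compatible order: every length-2 element below `c` has a unique
rising reduced factorization. -/
def CompatibleOrder (A : Set G) (c : G) (r : G → G → Prop) : Prop :=
  ∀ g : G, leA A g c → lenA A g = 2 →
    ∃! l : List G, l ∈ RedA A g ∧ l.Chain' r

/-- Two factorizations correspond to maximal chains differing in exactly one element. -/
def ChainAdj (l m : List G) : Prop :=
  l ≠ m ∧ ∃ (p s : List G) (a b a' b' : G),
    l = p ++ a :: b :: s ∧ m = p ++ a' :: b' :: s ∧ a * b = a' * b'

/-- Covering relation in the graded factorization poset. -/
def CoversA (A : Set G) (x y : G) : Prop := leA A x y ∧ lenA A y = lenA A x + 1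

/-- `F_≺(a; g)`: upper covers of the atom `a` in `P_g` that also cover a strictly
smaller atom. -/
def Fset (A : Set G) (r : G → G → Prop) (a g : G) : Set G :=
  {h : G | CoversA A a h ∧ leA A h g ∧
    ∃ a' ∈ A, a' ≠ a ∧ r a' a ∧ CoversA A a' h}

/-- `P_c` is well-covered with respect to `r`. -/
def WellCovered (A : Set G) (c : G) (r : G → G → Prop) : Prop :=
  ∀ a ∈ A, leA A a c →
    (Fset A r a c = ∅ ↔ ∀ b ∈ A, leA A b c → r a b)

/-- `P_c` is totally well-covered with respect to `r`. -/
def TotallyWellCovered (A : Set G) (c : G) (r : G → G → Prop) : Prop :=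
  ∀ g : G, leA A g c → WellCovered A g r

lemma lenA_le (A : Set G) (l : List G) (hA : ∀ a ∈ l, a ∈ A) :
    lenA A l.prod ≤ l.length :=
  Nat.sInf_le ⟨l, hA, rfl, rfl⟩

lemma lenA_exists (A : Set G) (hgen : GeneratesM A) (x : G) :
    ∃ l : List G, (∀ a ∈ l, a ∈ A) ∧ l.prod = x ∧ l.length = lenA A x := by
  have hne : {n : ℕ | ∃ l : List G, (∀ a ∈ l, a ∈ A) ∧ l.prod = x ∧ l.length = n}.Nonempty := by
    obtain ⟨l, h1, h2⟩ := hgen x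
    exact ⟨l.length, l, h1, h2, rfl⟩
  exact Nat.sInf_mem hne

lemma lenA_mul_le (A : Set G) (hgen : GeneratesM A) (x y : G) :
    lenA A (x * y) ≤ lenA A x + lenA A y := by
  obtain ⟨l1, h1, p1, q1⟩ := lenA_exists A hgen x
  obtain ⟨l2, h2, p2, q2⟩ := lenA_exists A hgen y
  have := lenA_le A (l1 ++ l2) (by intro a ha; rcases List.mem_append.mp ha with h|h
                                   exacts [h1 a h, h2 a h])
  simpa [List.prod_append, p1, p2, q1, q2] using this

lemma prod_map_conj (a : G) (p : List G) :
    (p.map (fun x => a⁻¹ * x * a)).prod = a⁻¹ * p.prod * a := by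
  induction p with
  | nil => simp
  | cons x t ih => simp [ih]; group

lemma mem_red_leA (A : Set G) (hgen : GeneratesM A) (hconj : ConjClosed A)
    (c : G) (l : List G) (hl : l ∈ RedA A c) (a : G) (ha : a ∈ l) :
    leA A a c := by
  obtain ⟨p, s, rfl⟩ := List.append_of_mem ha
  obtain ⟨hA, hprod, hlen⟩ := hl
  set q : List G := p.map (fun x => a⁻¹ * x * a) ++ s with hq
  have hqA : ∀ b ∈ q, b ∈ A := by
    intro b hb
    rcases List.mem_append.mp hb with h | h
    · obtain ⟨x, hx, rfl⟩ := List.mem_map.mp h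
      have := hconj a⁻¹ x (hA x (by simp [hx]))
      simpa using this
    · exact hA b (by simp [h])
  have hqprod : q.prod = a⁻¹ * c := by
    rw [hq, List.prod_append, prod_map_conj]
    rw [← hprod]
    simp [List.prod_append]
    group
  have hqlen : q.length = lenA A c - 1 := by
    rw [← hlen]; simp [hq]
  have hc1 : 1 ≤ lenA A c := by
    rw [← hlen]; simp; omega
  have h1 : lenA A (a⁻¹ * c) ≤ lenA A c - 1 := by
    have := lenA_le A q hqA
    rwa [hqprod, hqlen] at this
  have h2 : lenA A a ≤ 1 := by
    have := lenA_le A [a] (by simpa using hA a (by simp))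
    simpa using this
  have h3 : lenA A c ≤ lenA A a + lenA A (a⁻¹ * c) := by
    have := lenA_mul_le A hgen a (a⁻¹ * c)
    simpa using this
  unfold leA
  omega

lemma chain'_of_splits {α : Type*} (r : α → α → Prop) :
    ∀ l : List α, (∀ p s a b, l = p ++ a :: b :: s → r a b) → l.Chain' r
  | [] , _ => List.isChain_nil
  | [_], _ => List.isChain_singleton _
  | x :: y :: t, h =>
    List.isChain_cons_cons.mpr ⟨h [] t x y rfl,
      chain'_of_splits r (y :: t) (fun p s a b hp => h (x :: p) s a b (by simp [hp]))⟩

lemma lex_head {α : Type*} (s' : α → α → Prop) (hirr : ∀ x, ¬ s' x x)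
    (a b : α) (hab : a ≠ b) :
    ∀ (p : List α) (u v : List α),
      List.Lex s' (p ++ a :: u) (p ++ b :: v) → s' a b
  | [], u, v, h => by
      cases h with
      | cons h => exact absurd rfl hab
      | rel h => exact h
  | x :: p, u, v, h => by
      cases h with
      | cons h => exact lex_head s' hirr a b hab p u v h
      | rel h => exact absurd h (hirr x)

theorem lex_smallest_in_orbit_is_rising (A : Set G) (hgen : GeneratesM A)
    (hconj : ConjClosed A) (c : G) (hfin : (RedA A c).Finite)
    (r : G → G → Prop) (hlin : IsLinearOrderOn (Ac A c) r)
    (l : List G) (hl : l ∈ RedA A c)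
    (hmin : ∀ m ∈ RedA A c, Relation.EqvGen HurwitzMove l m → m ≠ l →
      List.Lex (fun u v => r u v ∧ u ≠ v) l m) :
    l.Chain' r := by
  apply chain'_of_splits
  intro p s a b heq
  have haL : a ∈ l := by rw [heq]; simp
  have hbL : b ∈ l := by rw [heq]; simp
  have haA : a ∈ A := hl.1 a haL
  have hbA : b ∈ A := hl.1 b hbL
  have hale : leA A a c := mem_red_leA A hgen hconj c l hl a haL
  by_cases hab : a = b
  · subst hab
    exact hlin.1 a ⟨haA, hale⟩
  · set m : List G := p ++ b :: (b⁻¹ * a * b) :: s with hm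
    have hmRed : m ∈ RedA A c := by
      refine ⟨?_, ?_, ?_⟩
      · intro x hx
        rw [hm] at hx
        rcases List.mem_append.mp hx with h | h
        · exact hl.1 x (by rw [heq]; exact List.mem_append.mpr (Or.inl h))
        · rcases h with _ | ⟨_, h⟩
          · exact hbA
          · rcases h with _ | ⟨_, h⟩
            · simpa using hconj b⁻¹ a haA
            · exact hl.1 x (by rw [heq]; exact List.mem_append.mpr (Or.inr (by simp; exact Or.inr (Or.inr h))))
      · have : m.prod = l.prod := by
          rw [hm, heq]
          simp [List.prod_append]
          group
        rw [this]; exact hl.2.1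
      · have : m.length = l.length := by rw [hm, heq]; simp
        rw [this]; exact hl.2.2
    have hne : m ≠ l := by
      intro h
      rw [hm, heq] at h
      have := List.append_cancel_left h
      exact hab (List.cons.injEq .. ▸ this).1.symm
    have hhur : Relation.EqvGen HurwitzMove l m :=
      Relation.EqvGen.rel l m ⟨p, s, a, b, heq, hm⟩
    have hlex := hmin m hmRed hhur hne
    rw [heq, hm] at hlex
    have hirr : ∀ x : G, ¬ ((fun u v => r u v ∧ u ≠ v) x x) := fun x h => h.2 rfl
    exact (lex_head _ hirr a b hab p (b :: s) ((b⁻¹ * a * b) :: s) hlex).1
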